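/- Let N be a metric space and let φ: N → [0,1] be a 1-Lipschitz function such that the image φ(N) has Lebesgue measure 1 in [0,1]. Assume that for every t ∈ φ(N) there exists x ∈ N with φ(x) = t and Lip φ(x) = 1, where Lip φ(x) denotes the pointwise Lipschitz constant of φ at x. Then the composition operator C_φ is isometric: ‖f ∘ φ‖ = ‖f‖ for every Lipschitz function f: [0,1] → ℝ. -/

import Mathlib

open Filter Topology

/-- The least Lipschitz constant (Lipschitz norm) of a real-valued function on a metric
space, expressed as `sup {(f x - f y)/d(x,y) : x ≠ y}`. -/
noncomputable def lipNorm {M : Type*} [MetricSpace M] (f : M → ℝ) : ℝ :=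
  sSup {r : ℝ | ∃ x y : M, x ≠ y ∧ r = (f x - f y) / dist x y}

/-- The pointwise Lipschitz constant `Lip g(x) = limsup_{y → x, y ≠ x} (g y - g x)/d(y,x)`.
(If `x` is isolated the filter `𝓝[≠] x` is trivial and the real-valued `limsup` is `0`
by convention, matching the definition in the paper.) -/
noncomputable def pLip {M : Type*} [MetricSpace M] (g : M → ℝ) (x : M) : ℝ :=
  Filter.limsup (fun y => (g y - g x) / dist y x) (𝓝[≠] x)

section Aux

open MeasureTheory Set

lemma slope_le_of_ae_deriv_le {F : ℝ → ℝ} {K : NNReal} (hF : LipschitzWith K F)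
    {L a b : ℝ} (hab : a ≤ b)
    (hae : ∀ᵐ x ∂volume, x ∈ Set.Ioo a b → DifferentiableAt ℝ F x ∧ deriv F x ≤ L) :
    F b - F a ≤ L * (b - a) := by
  have hlip : ∀ p q : ℝ, p ≤ q → F q - F p ≤ (K:ℝ) * (q - p) := by
    intro p q hpq
    have h1 := hF.dist_le_mul q p
    rw [Real.dist_eq, Real.dist_eq, abs_of_nonneg (sub_nonneg.2 hpq)] at h1
    calc F q - F p ≤ |F q - F p| := le_abs_self _
      _ ≤ (K:ℝ) * (q - p) := h1
  rcases le_or_gt (K:ℝ) L with hKL | hKL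
  · have := hlip a b hab
    nlinarith [sub_nonneg.2 hab]
  · set g : ℝ → ℝ := fun x => (K:ℝ) * x - F x with hg_def
    have hg : Monotone g := by
      intro p q hpq
      have h2 := hlip p q hpq
      have h1 := hF.dist_le_mul p q
      rw [Real.dist_eq, Real.dist_eq, abs_of_nonpos (by linarith : p - q ≤ 0)] at h1
      simp only [hg_def]
      nlinarith [le_of_abs_le h1]
    set μ := hg.stieltjesFunction.measure with hμ_def
    have hcont : Continuous g := (continuous_const.mul continuous_id).sub hF.continuous
    have hS : ∀ x, hg.stieltjesFunction x = g x := by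
      intro x
      rw [hg.stieltjesFunction_eq]
      exact rightLim_eq_of_tendsto
        ((hcont.tendsto x).mono_left nhdsWithin_le_nhds)
    have key : ∀ᵐ x ∂volume, x ∈ Set.Ioo a b →
        ENNReal.ofReal ((K:ℝ) - L) ≤ μ.rnDeriv volume x := by
      filter_upwards [hg.ae_hasDerivAt, hae, Measure.rnDeriv_lt_top μ volume]
        with x hx1 hx2 hx3 hmem
      obtain ⟨hdiff, hle⟩ := hx2 hmem
      have hder2 : HasDerivAt g ((K:ℝ) - deriv F x) x := by
        have h4 : HasDerivAt (fun y : ℝ => (K:ℝ) * y) ((K:ℝ) * 1) x :=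
          (hasDerivAt_id x).const_mul _
        rw [mul_one] at h4
        exact h4.sub hdiff.hasDerivAt
      have huniq : (μ.rnDeriv volume x).toReal = (K:ℝ) - deriv F x := hx1.unique hder2
      rw [← ENNReal.ofReal_toReal hx3.ne]
      exact ENNReal.ofReal_le_ofReal (by rw [huniq]; linarith)
    have chain : ENNReal.ofReal (((K:ℝ) - L) * (b - a)) ≤ ENNReal.ofReal (g b - g a) := by
      calc ENNReal.ofReal (((K:ℝ) - L) * (b - a))
          = ENNReal.ofReal ((K:ℝ) - L) * ENNReal.ofReal (b - a) :=
            ENNReal.ofReal_mul (by linarith)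
        _ = ENNReal.ofReal ((K:ℝ) - L) * volume (Set.Ioo a b) := by rw [Real.volume_Ioo]
        _ = ∫⁻ _ in Set.Ioo a b, ENNReal.ofReal ((K:ℝ) - L) ∂volume :=
            (setLIntegral_const _ _).symm
        _ ≤ ∫⁻ x in Set.Ioo a b, μ.rnDeriv volume x ∂volume :=
            lintegral_mono_ae ((ae_restrict_iff' measurableSet_Ioo).2 key)
        _ ≤ μ (Set.Ioo a b) := Measure.setLIntegral_rnDeriv_le _
        _ ≤ μ (Set.Ioc a b) := measure_mono Set.Ioo_subset_Ioc_self
        _ = ENNReal.ofReal (g b - g a) := by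
            rw [hμ_def, StieltjesFunction.measure_Ioc, hS, hS]
    have h2 : ((K:ℝ) - L) * (b - a) ≤ g b - g a :=
      (ENNReal.ofReal_le_ofReal_iff (sub_nonneg.2 (hg hab))).1 chain
    simp only [hg_def] at h2
    nlinarith

lemma stepA {N : Type*} [MetricSpace N] {φ : N → Set.Icc (0:ℝ) 1} (hφ : LipschitzWith 1 φ)
    {f : Set.Icc (0:ℝ) 1 → ℝ} {F : ℝ → ℝ} (hFf : ∀ t : Set.Icc (0:ℝ) 1, F ↑t = f t)
    {x : N} (hpl : pLip (fun y => ((φ y : ℝ))) x = 1)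
    {c : ℝ} (hd : HasDerivAt F c ((φ x : ℝ)))
    (hbdd : BddAbove {r : ℝ | ∃ a b : N, a ≠ b ∧ r = ((f ∘ φ) a - (f ∘ φ) b) / dist a b}) :
    |c| ≤ lipNorm (f ∘ φ) := by
  set u : ℝ := ((φ x : ℝ)) with hu_def
  set g : N → ℝ := fun y => (((φ y : ℝ)) - u) / dist y x with hg_def
  have hpl' : Filter.limsup g (𝓝[≠] x) = 1 := hpl
  have hdist : ∀ y : N, |((φ y : ℝ)) - u| ≤ dist y x := by
    intro y
    have h1 := hφ.dist_le_mul y x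
    rw [NNReal.coe_one, one_mul, Subtype.dist_eq, Real.dist_eq] at h1
    exact h1
  have hglb : ∀ y : N, -1 ≤ g y := by
    intro y
    rcases eq_or_ne y x with rfl | hyx
    · simp [hg_def]
    · have hd0 : 0 < dist y x := dist_pos.2 hyx
      rw [hg_def]
      rw [neg_le, ← neg_div, div_le_one hd0]
      linarith [neg_abs_le (((φ y : ℝ)) - u), hdist y]
  have hne : (𝓝[≠] x).NeBot := by
    by_contra h
    rw [not_neBot] at h
    rw [pLip, h, Filter.limsup_eq] at hpl
    have he : {a : ℝ | ∀ᶠ y in (⊥ : Filter N), (((φ y : ℝ)) - ((φ x : ℝ))) / dist y x ≤ a}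
        = Set.univ := by ext a; simp
    rw [he, Real.sInf_of_not_bddBelow] at hpl
    · norm_num at hpl
    · rintro ⟨z, hz⟩
      have := hz (Set.mem_univ (z - 1))
      linarith
  haveI := hne
  unfold lipNorm
  refine le_of_forall_pos_le_add ?_
  intro ε hε
  set δ : ℝ := ε / (2 * (|c| + 1)) with hδ_def
  have hδpos : 0 < δ := by positivity
  set ε' : ℝ := ε / 2 with hε'_def
  have hε'pos : 0 < ε' := by positivity
  have hfreq : ∃ᶠ y in 𝓝[≠] x, 1 - δ < g y := by
    by_contra h
    rw [not_frequently] at h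
    have h' : ∀ᶠ y in 𝓝[≠] x, g y ≤ 1 - δ := h.mono fun y hy => not_lt.1 hy
    have hco : IsCoboundedUnder (· ≤ ·) (𝓝[≠] x) g :=
      isCoboundedUnder_le_of_le _ (x := -1) hglb
    have := Filter.limsup_le_of_le hco h'
    rw [hpl'] at this
    linarith
  have hlo := (hasDerivAt_iff_isLittleO.1 hd).def hε'pos
  have ht : Filter.Tendsto (fun y : N => ((φ y : ℝ))) (𝓝[≠] x) (𝓝 u) :=
    ((continuous_subtype_val.comp hφ.continuous).continuousAt.tendsto).mono_left
      nhdsWithin_le_nhds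
  have heve : ∀ᶠ y in 𝓝[≠] x,
      ‖F ((φ y : ℝ)) - F u - (((φ y : ℝ)) - u) • c‖ ≤ ε' * ‖((φ y : ℝ)) - u‖ :=
    ht.eventually hlo
  have hmem : ∀ᶠ y in 𝓝[≠] x, y ≠ x := by
    filter_upwards [self_mem_nhdsWithin] with y hy
    exact hy
  obtain ⟨y, hy1, hy2, hy3⟩ := (hfreq.and_eventually (heve.and hmem)).exists
  set d : ℝ := dist y x with hd_def
  have hd0 : 0 < d := dist_pos.2 hy3
  set v : ℝ := ((φ y : ℝ)) with hv_def
  have hm : v - u ≤ d := le_trans (le_abs_self _) (hdist y)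
  have hm2 : (v - u) / d ≤ 1 := (div_le_one hd0).2 hm
  have hm3 : 1 - δ < (v - u) / d := hy1
  set r1 : ℝ := ((f ∘ φ) y - (f ∘ φ) x) / dist y x with hr1_def
  have hr1mem : r1 ∈ {r : ℝ | ∃ a b : N, a ≠ b ∧ r = ((f ∘ φ) a - (f ∘ φ) b) / dist a b} :=
    ⟨y, x, hy3, rfl⟩
  have hr2mem : -r1 ∈ {r : ℝ | ∃ a b : N, a ≠ b ∧ r = ((f ∘ φ) a - (f ∘ φ) b) / dist a b} := by
    refine ⟨x, y, hy3.symm, ?_⟩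
    rw [hr1_def, dist_comm]
    ring
  have hfv : (f ∘ φ) y = F v := (hFf (φ y)).symm
  have hfu : (f ∘ φ) x = F u := (hFf (φ x)).symm
  have hr1 : r1 = (F v - F u) / d := by rw [hr1_def, hfv, hfu, hd_def]
  have e1 : |F v - F u - (v - u) * c| ≤ ε' * d := by
    have h2 : ‖F v - F u - (v - u) • c‖ ≤ ε' * ‖v - u‖ := hy2
    rw [smul_eq_mul, Real.norm_eq_abs, Real.norm_eq_abs] at h2
    exact h2.trans (mul_le_mul_of_nonneg_left (hdist y) hε'pos.le)
  have e2 : |r1 - ((v - u) / d) * c| ≤ ε' := by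
    rw [hr1]
    have heq : (F v - F u) / d - ((v - u) / d) * c = (F v - F u - (v - u) * c) / d := by
      ring
    rw [heq, abs_div, abs_of_pos hd0, div_le_iff₀ hd0]
    linarith
  have e3 : |((v - u) / d) * c - c| ≤ |c| * δ := by
    have heq : ((v - u) / d) * c - c = c * ((v - u) / d - 1) := by ring
    rw [heq, abs_mul]
    refine mul_le_mul_of_nonneg_left ?_ (abs_nonneg c)
    rw [abs_of_nonpos (by linarith)]
    linarith
  have e4 : |r1 - c| ≤ ε' + |c| * δ :=
    calc |r1 - c| ≤ |r1 - ((v - u) / d) * c| + |((v - u) / d) * c - c| := by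
          have : r1 - c = (r1 - ((v - u) / d) * c) + (((v - u) / d) * c - c) := by ring
          rw [this]; exact abs_add_le _ _
      _ ≤ ε' + |c| * δ := add_le_add e2 e3
  have hslack : ε' + |c| * δ ≤ ε := by
    have hA : (0:ℝ) < |c| + 1 := by positivity
    have h1 : |c| * δ ≤ (|c| + 1) * δ :=
      mul_le_mul_of_nonneg_right (by linarith) hδpos.le
    have h2 : (|c| + 1) * δ = ε / 2 := by
      rw [hδ_def]; field_simp
    rw [hε'_def]
    linarith
  have hsup1 := le_csSup hbdd hr1mem
  have hsup2 := le_csSup hbdd hr2mem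
  have habs := abs_le.1 e4
  refine abs_le.2 ⟨?_, ?_⟩
  · linarith [habs.2]
  · linarith [habs.1]

end Aux

/-- If `φ : N → [0,1]` is `1`-Lipschitz, `φ(N)` has Lebesgue measure `1`
in `[0,1]`, and every `t ∈ φ(N)` admits a preimage `x` with pointwise Lipschitz constant
`Lip φ(x) = 1`, then the composition operator `C_φ` is isometric. -/
theorem stmt2 {N : Type*} [MetricSpace N]
    (φ : N → Set.Icc (0:ℝ) 1) (hφ : LipschitzWith 1 φ)
    (hmeas : MeasureTheory.volume ((fun t : Set.Icc (0:ℝ) 1 => (t : ℝ)) '' Set.range φ) = 1)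
    (hLip : ∀ t ∈ Set.range φ, ∃ x : N, φ x = t ∧ pLip (fun y => (φ y : ℝ)) x = 1) :
    ∀ f : Set.Icc (0:ℝ) 1 → ℝ, (∃ K : NNReal, LipschitzWith K f) →
      lipNorm (f ∘ φ) = lipNorm f := by
  classical
  open MeasureTheory Set in
  rintro f ⟨K, hf⟩
  -- abbreviations
  set S₂ : Set ℝ := {r : ℝ | ∃ a b : N, a ≠ b ∧ r = ((f ∘ φ) a - (f ∘ φ) b) / dist a b}
    with hS₂_def
  set S₁ : Set ℝ :=
      {r : ℝ | ∃ s t : Set.Icc (0:ℝ) 1, s ≠ t ∧ r = (f s - f t) / dist s t} with hS₁_def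
  have hφd : ∀ a b : N, dist (φ a) (φ b) ≤ dist a b := by
    intro a b
    have := hφ.dist_le_mul a b
    rwa [NNReal.coe_one, one_mul] at this
  have hfd : ∀ s t : Set.Icc (0:ℝ) 1, |f s - f t| ≤ (K:ℝ) * dist s t := by
    intro s t
    have := hf.dist_le_mul s t
    rwa [Real.dist_eq] at this
  have hbdd₁ : BddAbove S₁ := by
    refine ⟨(K:ℝ), ?_⟩
    rintro r ⟨s, t, hst, rfl⟩
    have hd0 : 0 < dist s t := dist_pos.2 hst
    rw [div_le_iff₀ hd0]
    exact le_trans (le_abs_self _) (hfd s t)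
  have hbdd₂ : BddAbove S₂ := by
    refine ⟨(K:ℝ), ?_⟩
    rintro r ⟨a, b, hab, rfl⟩
    have hd0 : 0 < dist a b := dist_pos.2 hab
    rw [div_le_iff₀ hd0]
    calc (f ∘ φ) a - (f ∘ φ) b ≤ |f (φ a) - f (φ b)| := le_abs_self _
      _ ≤ (K:ℝ) * dist (φ a) (φ b) := hfd _ _
      _ ≤ (K:ℝ) * dist a b := by
          exact mul_le_mul_of_nonneg_left (hφd a b) K.coe_nonneg
  -- there are two points with distinct φ-values
  have hNtwo : ∃ a b : N, φ a ≠ φ b := by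
    by_contra h
    push_neg at h
    rcases isEmpty_or_nonempty N with hN | hN
    · rw [Set.range_eq_empty φ, Set.image_empty] at hmeas
      simp at hmeas
    · obtain ⟨a⟩ := hN
      have hsub : ((fun t : Set.Icc (0:ℝ) 1 => (t : ℝ)) '' Set.range φ) ⊆ {((φ a : ℝ))} := by
        rintro _ ⟨t, ⟨z, rfl⟩, rfl⟩
        simp [h z a]
      have := measure_mono (μ := volume) hsub
      rw [hmeas, Real.volume_singleton] at this
      simp at this
  obtain ⟨a₀, b₀, hab₀⟩ := hNtwo
  have hab₀' : a₀ ≠ b₀ := fun h => hab₀ (by rw [h])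
  -- nonnegativity of the two sups
  have hnn : ∀ (r : ℝ), r ∈ S₂ → -r ∈ S₂ → 0 ≤ sSup S₂ := by
    intro r h1 h2
    rcases le_total r 0 with h | h
    · have := le_csSup hbdd₂ h2
      linarith
    · have := le_csSup hbdd₂ h1
      linarith
  have hL₂nonneg : 0 ≤ lipNorm (f ∘ φ) := by
    have h1 : ((f ∘ φ) a₀ - (f ∘ φ) b₀) / dist a₀ b₀ ∈ S₂ := ⟨a₀, b₀, hab₀', rfl⟩
    have h2 : -(((f ∘ φ) a₀ - (f ∘ φ) b₀) / dist a₀ b₀) ∈ S₂ := by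
      refine ⟨b₀, a₀, hab₀'.symm, ?_⟩
      rw [dist_comm]; ring
    exact hnn _ h1 h2
  have hL₁nonneg : 0 ≤ lipNorm f := by
    have h01 : (⟨0, by norm_num, by norm_num⟩ : Set.Icc (0:ℝ) 1)
        ≠ (⟨1, by norm_num, by norm_num⟩ : Set.Icc (0:ℝ) 1) := by
      intro h
      have := congrArg (fun t : Set.Icc (0:ℝ) 1 => (t : ℝ)) h
      norm_num at this
    set s : Set.Icc (0:ℝ) 1 := ⟨0, by norm_num, by norm_num⟩
    set t : Set.Icc (0:ℝ) 1 := ⟨1, by norm_num, by norm_num⟩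
    have h1 : (f s - f t) / dist s t ∈ S₁ := ⟨s, t, h01, rfl⟩
    have h2 : -((f s - f t) / dist s t) ∈ S₁ := by
      refine ⟨t, s, h01.symm, ?_⟩
      rw [dist_comm]; ring
    rcases le_total ((f s - f t) / dist s t) 0 with h | h
    · have := le_csSup hbdd₁ h2
      unfold lipNorm
      linarith
    · have := le_csSup hbdd₁ h1
      unfold lipNorm
      linarith
  -- Direction 1 : lipNorm (f ∘ φ) ≤ lipNorm f
  have dir1 : lipNorm (f ∘ φ) ≤ lipNorm f := by
    have : sSup S₂ ≤ lipNorm f := by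
      apply Real.sSup_le _ hL₁nonneg
      rintro r ⟨a, b, hab, rfl⟩
      have hdab : 0 < dist a b := dist_pos.2 hab
      rcases eq_or_ne (φ a) (φ b) with he | hne
      · simp only [Function.comp_apply, he, sub_self, zero_div]
        exact hL₁nonneg
      · have hd1 : 0 < dist (φ a) (φ b) := dist_pos.2 hne
        rcases le_total (f (φ a) - f (φ b)) 0 with h | h
        · have : ((f ∘ φ) a - (f ∘ φ) b) / dist a b ≤ 0 := div_nonpos_iff.2 (Or.inr ⟨h, hdab.le⟩)
          linarith
        · have hmem : (f (φ a) - f (φ b)) / dist (φ a) (φ b) ∈ S₁ := ⟨φ a, φ b, hne, rfl⟩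
          have hle : ((f ∘ φ) a - (f ∘ φ) b) / dist a b
              ≤ (f (φ a) - f (φ b)) / dist (φ a) (φ b) := by
            rw [div_le_div_iff₀ hdab hd1]
            simp only [Function.comp_apply]
            nlinarith [hφd a b]
          exact hle.trans (le_csSup hbdd₁ hmem)
    exact this
  -- Direction 2 : lipNorm f ≤ lipNorm (f ∘ φ)
  set F : ℝ → ℝ := fun v => f (Set.projIcc (0:ℝ) 1 zero_le_one v) with hF_def
  have hFf : ∀ t : Set.Icc (0:ℝ) 1, F ↑t = f t := fun t =>
    congrArg f (Set.projIcc_val zero_le_one t)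
  have hFlip : LipschitzWith K F := by
    have := hf.comp (LipschitzWith.projIcc (a := (0:ℝ)) (b := 1) zero_le_one)
    rwa [mul_one] at this
  have hrad : ∀ᵐ v ∂volume, DifferentiableAt ℝ F v :=
    hFlip.ae_differentiableAt_of_real
  set L₂ : ℝ := lipNorm (f ∘ φ) with hL₂_def
  set S : Set ℝ := Set.Ioo (0:ℝ) 1 ∩ {v | DifferentiableAt ℝ F v} ∩ {v | L₂ < |deriv F v|}
    with hSdef
  have hSmeas : MeasurableSet S :=
    (measurableSet_Ioo.inter (measurableSet_of_differentiableAt ℝ F)).inter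
      (measurableSet_lt measurable_const (measurable_deriv F).abs)
  have hSE : ∀ v ∈ ((fun t : Set.Icc (0:ℝ) 1 => (t : ℝ)) '' Set.range φ), v ∉ S := by
    rintro _ ⟨t, ⟨z, rfl⟩, rfl⟩ hvS
    obtain ⟨x, hx1, hx2⟩ := hLip (φ z) ⟨z, rfl⟩
    have hvd : DifferentiableAt ℝ F ((φ z : ℝ)) := hvS.1.2
    have hd : HasDerivAt F (deriv F ((φ z : ℝ))) ((φ x : ℝ)) := by
      rw [hx1]
      exact hvd.hasDerivAt
    have := stepA hφ hFf hx2 hd hbdd₂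
    exact absurd this (not_le.2 hvS.2)
  have hSsub : S ⊆ Set.Icc (0:ℝ) 1 := fun v hv => Set.Ioo_subset_Icc_self hv.1.1
  have hS0 : volume S = 0 := by
    have h1 : ((fun t : Set.Icc (0:ℝ) 1 => (t : ℝ)) '' Set.range φ)
        ⊆ Set.Icc (0:ℝ) 1 \ S := by
      rintro v hv
      refine ⟨?_, hSE v hv⟩
      obtain ⟨t, _, rfl⟩ := hv
      exact t.2
    have h2 : volume (Set.Icc (0:ℝ) 1 \ S) + volume S = volume (Set.Icc (0:ℝ) 1) := by
      rw [← measure_union (disjoint_sdiff_left) hSmeas, Set.diff_union_of_subset hSsub]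
    have h3 : (1 : ENNReal) ≤ volume (Set.Icc (0:ℝ) 1 \ S) := by
      rw [← hmeas]
      exact measure_mono h1
    have h4 : volume (Set.Icc (0:ℝ) 1) = 1 := by
      rw [Real.volume_Icc]
      norm_num
    rw [h4] at h2
    have h5 : (1 : ENNReal) + volume S ≤ 1 + 0 := by
      calc (1 : ENNReal) + volume S ≤ volume (Set.Icc (0:ℝ) 1 \ S) + volume S :=
            add_le_add h3 le_rfl
        _ = 1 := h2
        _ = 1 + 0 := by rw [add_zero]
    have := (ENNReal.add_le_add_iff_left (by norm_num)).1 h5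
    exact le_antisymm this zero_le
  have hae : ∀ᵐ v ∂volume, v ∈ Set.Ioo (0:ℝ) 1 →
      DifferentiableAt ℝ F v ∧ |deriv F v| ≤ L₂ := by
    have hS0' : ∀ᵐ v ∂volume, v ∉ S := by
      rw [MeasureTheory.ae_iff]
      simpa [not_not] using hS0
    filter_upwards [hrad, hS0'] with v h1 h2 hv
    exact ⟨h1, not_lt.1 fun hlt => h2 ⟨⟨hv, h1⟩, hlt⟩⟩
  have hkey : ∀ s t : Set.Icc (0:ℝ) 1, f s - f t ≤ L₂ * dist s t := by
    intro s t
    have hdist_st : dist s t = |(s:ℝ) - (t:ℝ)| := by rw [Subtype.dist_eq, Real.dist_eq]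
    rcases le_total (t:ℝ) (s:ℝ) with h | h
    · have hsub : ∀ᵐ v ∂volume, v ∈ Set.Ioo (t:ℝ) (s:ℝ) →
          DifferentiableAt ℝ F v ∧ deriv F v ≤ L₂ := by
        filter_upwards [hae] with v hv hmem
        have hv01 : v ∈ Set.Ioo (0:ℝ) 1 :=
          ⟨lt_of_le_of_lt t.2.1 hmem.1, lt_of_lt_of_le hmem.2 s.2.2⟩
        exact ⟨(hv hv01).1, le_trans (le_abs_self _) (hv hv01).2⟩
      have hres := slope_le_of_ae_deriv_le hFlip h hsub
      rw [hFf, hFf] at hres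
      rw [hdist_st, abs_of_nonneg (by linarith : (0:ℝ) ≤ (s:ℝ) - (t:ℝ))]
      linarith
    · have hGlip : LipschitzWith K (fun v => -F v) := hFlip.neg
      have hsub : ∀ᵐ v ∂volume, v ∈ Set.Ioo (s:ℝ) (t:ℝ) →
          DifferentiableAt ℝ (fun v => -F v) v ∧ deriv (fun v => -F v) v ≤ L₂ := by
        filter_upwards [hae] with v hv hmem
        have hv01 : v ∈ Set.Ioo (0:ℝ) 1 :=
          ⟨lt_of_le_of_lt s.2.1 hmem.1, lt_of_lt_of_le hmem.2 t.2.2⟩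
        obtain ⟨hdiff, hb⟩ := hv hv01
        refine ⟨hdiff.neg, ?_⟩
        rw [deriv.fun_neg]
        linarith [(abs_le.1 hb).1]
      have hres := slope_le_of_ae_deriv_le hGlip h hsub
      rw [hFf, hFf] at hres
      rw [hdist_st, abs_of_nonpos (by linarith : (s:ℝ) - (t:ℝ) ≤ 0)]
      linarith
  have dir2 : lipNorm f ≤ lipNorm (f ∘ φ) := by
    have : sSup S₁ ≤ L₂ := by
      apply Real.sSup_le _ hL₂nonneg
      rintro r ⟨s, t, hst, rfl⟩
      have hd0 : 0 < dist s t := dist_pos.2 hst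
      rw [div_le_iff₀ hd0]
      exact hkey s t
    exact this
  exact le_antisymm dir1 dir2
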